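/- The weak-subobject doctrine of Rec agrees with that of partitioned assemblies along the embedding: for every A ⊆ ℕ, the map sending the class of a morphism f : B → A of Rec to the class of Sgl_p(f) : Sgl_p(B) → Sgl_p(A) is an order-isomorphism between wSub_Rec(A) and wSub_pAsm(Sgl_p(A)), and these isomorphisms are natural in A (they commute with reindexing by pullback along morphisms of Rec). -/

import Mathlib

open CategoryTheory

namespace RecPaper

/-- Kleene application `{e}(n)`: apply the partial recursive function with Gödel code `e`
to the input `n`. -/
def kap (e n : ℕ) : Part ℕ :=
  Nat.Partrec.Code.eval (Denumerable.ofNat Nat.Partrec.Code e) n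

/-- The type of objects of the category `Rec`: subsets of `ℕ`. -/
def RecCat : Type := Set ℕ

/-- The underlying subset of `ℕ` of an object of `Rec`. -/
def RecCat.carrier (A : RecCat) : Set ℕ := A

/-- View a subset of `ℕ` as an object of `Rec`. -/
def RecCat.ofSet (A : Set ℕ) : RecCat := A

instance : CoeSort RecCat Type := ⟨fun A => {n : ℕ // n ∈ A.carrier}⟩

/-- A function between subsets of `ℕ` is *tracked* if there is a partial recursive
function, defined on the whole domain, whose restriction to the domain is the given
function. -/
def Tracked {A B : RecCat} (f : A → B) : Prop :=
  ∃ g : ℕ →. ℕ, Nat.Partrec g ∧ ∀ a : A, g a.val = Part.some (f a).val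

/-- The category `Rec` of subsets of `ℕ` and restrictions of partial recursive functions. -/
instance : Category RecCat where
  Hom A B := {f : A → B // Tracked f}
  id A := ⟨fun a => a, (fun n => n : ℕ → ℕ), Nat.Partrec.of_primrec Nat.Primrec.id,
    fun _ => rfl⟩
  comp {A B C} f g := ⟨fun a => g.1 (f.1 a), by
    obtain ⟨u, pu, hu⟩ := f.2
    obtain ⟨v, pv, hv⟩ := g.2
    refine ⟨fun n => u n >>= v, pv.comp pu, fun a => ?_⟩
    exact (congrArg (fun p => p >>= v) (hu a)).trans ((Part.bind_some _ v).trans (hv (f.1 a)))⟩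
  id_comp _ := rfl
  comp_id _ := rfl
  assoc _ _ _ := rfl

/-- The underlying function of a morphism of `Rec`. -/
def hfun {A B : RecCat} (f : A ⟶ B) : A → B := f.1

/-- The value of a morphism of `Rec` on an element, as a natural number. -/
def happ {A B : RecCat} (f : A ⟶ B) (a : A) : ℕ := (hfun f a).val


/-- Objects of the category `Asm` of assemblies: a set together with nonempty sets of
realizers. -/
structure AsmObj : Type 1 where
  carrier : Type
  real : carrier → Set ℕ
  hne : ∀ a, (real a).Nonempty

/-- Tracking for functions between assemblies: some partial recursive function sends
realizers of `a` to realizers of `f a`. -/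
def AsmTracked {X Y : AsmObj} (f : X.carrier → Y.carrier) : Prop :=
  ∃ g : ℕ →. ℕ, Nat.Partrec g ∧
    ∀ a : X.carrier, ∀ n ∈ X.real a, ∃ v ∈ Y.real (f a), g n = Part.some v

/-- The category `Asm` of assemblies. -/
instance : Category AsmObj where
  Hom X Y := {f : X.carrier → Y.carrier // AsmTracked f}
  id X := ⟨fun a => a, (fun n => n : ℕ → ℕ), Nat.Partrec.of_primrec Nat.Primrec.id,
    fun _ n hn => ⟨n, hn, rfl⟩⟩
  comp {X Y Z} f g := ⟨fun a => g.1 (f.1 a), by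
    obtain ⟨u, pu, hu⟩ := f.2
    obtain ⟨v, pv, hv⟩ := g.2
    refine ⟨fun n => u n >>= v, pv.comp pu, fun a n hn => ?_⟩
    obtain ⟨m, hm, hum⟩ := hu a n hn
    obtain ⟨w, hw, hvw⟩ := hv (f.1 a) m hm
    exact ⟨w, hw, (congrArg (fun p => p >>= v) hum).trans ((Part.bind_some _ v).trans hvw)⟩⟩
  id_comp _ := rfl
  comp_id _ := rfl
  assoc _ _ _ := rfl

/-- An assembly is partitioned if every set of realizers is a singleton. -/
def AsmObj.IsPartitioned (X : AsmObj) : Prop := ∀ a, ∃ n, X.real a = {n}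

/-- An assembly is modest if distinct elements have disjoint sets of realizers. -/
def AsmObj.IsModest (X : AsmObj) : Prop :=
  ∀ a b, (X.real a ∩ X.real b).Nonempty → a = b

/-- The assembly `(A, a ↦ {a})` attached to an object of `Rec`. -/
def SglObj (A : RecCat) : AsmObj :=
  ⟨{n : ℕ // n ∈ A.carrier}, fun a => {a.val}, fun a => ⟨a.val, rfl⟩⟩

/-- The functor `Sgl : Rec ⥤ Asm` sending `A` to `(A, a ↦ {a})` and each morphism to
itself. -/
def Sgl : RecCat ⥤ AsmObj where
  obj A := SglObj A
  map {A B} f := ⟨fun a => hfun f a, by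
    obtain ⟨g, pg, hg⟩ := f.2
    refine ⟨g, pg, fun a n hn => ⟨(hfun f a).val, rfl, ?_⟩⟩
    have hna : n = a.val := hn
    rw [hna]
    exact hg a⟩
  map_id _ := rfl
  map_comp _ _ := rfl


/-- The category `pAsm` of partitioned assemblies, as a full subcategory of `Asm`. -/
abbrev PAsm : Type 1 := ObjectProperty.FullSubcategory AsmObj.IsPartitioned

/-- The functor `Sgl_p : Rec ⥤ pAsm` sending `A` to `(A, a ↦ {a})` and each morphism to
itself. -/
def Sglp : RecCat ⥤ PAsm where
  obj A := ⟨SglObj A, fun a => ⟨a.val, rfl⟩⟩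
  map f := ObjectProperty.homMk (Sgl.map f)
  map_id _ := rfl
  map_comp _ _ := rfl

lemma sglp_faithful {B C : RecCat} (h h' : B ⟶ C) (e : Sglp.map h = Sglp.map h') :
    h = h' := by
  apply Subtype.ext
  have := congrArg (fun k => k.hom.1) e
  exact this

lemma sglp_full {B C : RecCat} (k : Sglp.obj B ⟶ Sglp.obj C) :
    ∃ h : B ⟶ C, Sglp.map h = k := by
  obtain ⟨g, pg, hg⟩ := k.hom.2
  refine ⟨⟨k.hom.1, g, pg, fun a => ?_⟩, ObjectProperty.hom_ext _ (Subtype.ext rfl)⟩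
  obtain ⟨v, hv, hgv⟩ := hg a a.val rfl
  have : v = (k.hom.1 a).val := hv
  rw [hgv, this]

lemma wsub_surj (A : RecCat) (X : PAsm) (u : X ⟶ Sglp.obj A) :
    ∃ (B : RecCat) (f : B ⟶ A) (k₁ : Sglp.obj B ⟶ X) (k₂ : X ⟶ Sglp.obj B),
      k₁ ≫ u = Sglp.map f ∧ k₂ ≫ Sglp.map f = u := by
  classical
  -- choose a realizer function
  set r : X.1.carrier → ℕ := fun x => (X.2 x).choose with hr
  have hrx : ∀ x, X.1.real x = {r x} := fun x => (X.2 x).choose_spec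
  obtain ⟨g, pg, hg⟩ := u.hom.2
  have key : ∀ x, g (r x) = Part.some (u.hom.1 x).val := by
    intro x
    obtain ⟨v, hv, hgv⟩ := hg x (r x) (by rw [hrx x]; rfl)
    have : v = (u.hom.1 x).val := hv
    rw [hgv, this]
  set B : RecCat := Set.range r with hB
  have memB : ∀ b : B, ∃ x, r x = b.val := fun b => b.2
  set χ : B → X.1.carrier := fun b => (memB b).choose with hχ
  have hχ2 : ∀ b : B, r (χ b) = b.val := fun b => (memB b).choose_spec
  -- the map f : B ⟶ A
  have hgB : ∀ b : B, g b.val = Part.some (u.hom.1 (χ b)).val := by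
    intro b; rw [← hχ2 b]; exact key (χ b)
  have memA : ∀ b : B, (u.hom.1 (χ b)).val ∈ A.carrier := fun b => (u.hom.1 (χ b)).2
  refine ⟨B, ⟨fun b => ⟨(u.hom.1 (χ b)).val, memA b⟩, g, pg, fun b => hgB b⟩,
    ⟨χ, (fun n => n : ℕ → ℕ), Nat.Partrec.of_primrec Nat.Primrec.id, ?_⟩,
    ⟨fun x => ⟨r x, ⟨x, rfl⟩⟩, (fun n => n : ℕ → ℕ),
      Nat.Partrec.of_primrec Nat.Primrec.id, ?_⟩, ?_, ?_⟩
  · intro b n hn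
    have hn' : n = b.val := hn
    refine ⟨b.val, ?_, by rw [hn']; rfl⟩
    rw [hrx (χ b), hχ2 b]; rfl
  · intro x n hn
    rw [hrx x] at hn
    have hn' : n = r x := hn
    exact ⟨r x, rfl, by rw [hn']; rfl⟩
  · apply ObjectProperty.hom_ext; apply Subtype.ext; rfl
  · apply ObjectProperty.hom_ext; apply Subtype.ext
    funext x
    -- value at x : u.hom.1 (χ ⟨r x, _⟩) must equal u.hom.1 x
    apply Subtype.ext
    show (u.hom.1 (χ ⟨r x, ⟨x, rfl⟩⟩)).val = (u.hom.1 x).val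
    have h1 := key (χ (⟨r x, ⟨x, rfl⟩⟩ : B))
    rw [hχ2 (⟨r x, ⟨x, rfl⟩⟩ : B)] at h1
    have h2 := key x
    have := h1.symm.trans h2
    exact Part.some_injective this

/-- The weak-subobject doctrine of `Rec` agrees with that of partitioned assemblies along
the embedding `Sgl_p`: the assignment `[f] ↦ [Sgl_p f]` preserves and reflects the order
of weak subobjects, is surjective up to mutual factorization, and commutes with
reindexing by pullback along morphisms of `Rec`. -/
theorem rec_wsub_eq_pasm_wsub :
    (∀ (A B C : RecCat) (f : B ⟶ A) (g : C ⟶ A),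
      (∃ h : B ⟶ C, h ≫ g = f) ↔
      (∃ k : Sglp.obj B ⟶ Sglp.obj C, k ≫ Sglp.map g = Sglp.map f)) ∧
    (∀ (A : RecCat) (X : PAsm) (u : X ⟶ Sglp.obj A),
      ∃ (B : RecCat) (f : B ⟶ A) (k₁ : Sglp.obj B ⟶ X) (k₂ : X ⟶ Sglp.obj B),
        k₁ ≫ u = Sglp.map f ∧ k₂ ≫ Sglp.map f = u) ∧
    (∀ (A A' : RecCat) (h : A' ⟶ A) (B : RecCat) (f : B ⟶ A)
       (W : RecCat) (w : W ⟶ B) (f' : W ⟶ A'),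
      IsPullback w f' f h →
      ∀ (V : PAsm) (v₁ : V ⟶ Sglp.obj B) (v₂ : V ⟶ Sglp.obj A'),
        IsPullback v₁ v₂ (Sglp.map f) (Sglp.map h) →
        ∃ (k₁ : Sglp.obj W ⟶ V) (k₂ : V ⟶ Sglp.obj W),
          k₁ ≫ v₂ = Sglp.map f' ∧ k₂ ≫ Sglp.map f' = v₂) := by
  refine ⟨?_, ?_, ?_⟩
  · intro A B C f g
    constructor
    · rintro ⟨h, hh⟩
      exact ⟨Sglp.map h, by rw [← Sglp.map_comp, hh]⟩
    · rintro ⟨k, hk⟩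
      obtain ⟨h, hh⟩ := sglp_full k
      refine ⟨h, sglp_faithful _ _ ?_⟩
      rw [Sglp.map_comp, hh, hk]
  · intro A X u
    exact wsub_surj A X u
  · intro A A' h B f W w f' hW V v₁ v₂ hV
    obtain ⟨C, c, k₁', k₂', hk₁', hk₂'⟩ := wsub_surj A' V v₂
    obtain ⟨b, hb⟩ := sglp_full (k₁' ≫ v₁)
    have hbc : b ≫ f = c ≫ h := by
      apply sglp_faithful
      rw [Sglp.map_comp, Sglp.map_comp, hb, Category.assoc, hV.w, ← Category.assoc,
        hk₁']
    refine ⟨hV.lift (Sglp.map w) (Sglp.map f')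
        (by rw [← Sglp.map_comp, ← Sglp.map_comp, hW.w]),
      k₂' ≫ Sglp.map (hW.lift b c hbc), hV.lift_snd _ _ _, ?_⟩
    rw [Category.assoc, ← Sglp.map_comp, hW.lift_snd, hk₂']

end RecPaper
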